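/- Consider the ODE system v'(t) = Mv(t) + g(v(t)) where M is Metzler and g has a diagonal nonnegative Jacobian. If w₀ := Mv₀ + g(v₀) is componentwise positive, then v'(t) is componentwise positive for all t in the interval of existence; i.e., the solution is componentwise strictly increasing in t. -/

import Mathlib

open Set Filter Topology

/-- A CLM with diagonal matrix acts componentwise. -/
lemma diag_clm_apply {n : ℕ} (A : (Fin n → ℝ) →L[ℝ] (Fin n → ℝ))
    (hdiag : ∀ i j, i ≠ j → A (Pi.single j 1) i = 0) (x : Fin n → ℝ) (i : Fin n) :
    A x i = x i * A (Pi.single i 1) i := by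
  have hx : x = ∑ j, x j • (Pi.single j (1:ℝ) : Fin n → ℝ) := by
    conv_lhs => rw [← Finset.univ_sum_single x]
    refine Finset.sum_congr rfl fun j _ => ?_
    ext k
    simp [Pi.single_apply]
  calc A x i = A (∑ j, x j • (Pi.single j (1:ℝ) : Fin n → ℝ)) i := by rw [← hx]
    _ = ∑ j, x j * A (Pi.single j 1) i := by
        rw [map_sum]
        simp [Finset.sum_apply]
    _ = x i * A (Pi.single i 1) i := by
        rw [Finset.sum_eq_single i]
        · intro j _ hj
          simp [hdiag i j (Ne.symm hj)]
        · simp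

lemma mulVec_diag_le {n : ℕ} (M : Matrix (Fin n) (Fin n) ℝ)
    (hM : ∀ i j, i ≠ j → 0 ≤ M i j) (x : Fin n → ℝ) (hx : ∀ j, 0 ≤ x j) (i : Fin n) :
    M i i * x i ≤ M.mulVec x i := by
  have : M.mulVec x i = ∑ j, M i j * x j := by
    simp [Matrix.mulVec, dotProduct]
  rw [this, ← Finset.add_sum_erase Finset.univ _ (Finset.mem_univ i)]
  have : 0 ≤ ∑ j ∈ Finset.univ.erase i, M i j * x j := by
    refine Finset.sum_nonneg fun j hj => ?_
    exact mul_nonneg (hM i j (Ne.symm (Finset.ne_of_mem_erase hj))) (hx j)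
  linarith

theorem stmt_11 {n : ℕ} (M : Matrix (Fin n) (Fin n) ℝ)
    (hM : ∀ i j, i ≠ j → 0 ≤ M i j)
    (g : (Fin n → ℝ) → Fin n → ℝ)
    (g' : (Fin n → ℝ) → (Fin n → ℝ) →L[ℝ] (Fin n → ℝ))
    (hg : ∀ u, HasFDerivAt g (g' u) u) (hg'cont : Continuous g')
    (hdiagJ : ∀ u i j, i ≠ j → g' u (Pi.single j 1) i = 0)
    (hnonnegJ : ∀ u i, 0 ≤ g' u (Pi.single i 1) i)
    (t₀ T : ℝ) (v₀ : Fin n → ℝ) (v : ℝ → Fin n → ℝ)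
    (hv : ∀ t ∈ Set.Ico t₀ T, HasDerivAt v (M.mulVec (v t) + g (v t)) t)
    (hv₀ : v t₀ = v₀)
    (hw₀ : ∀ i, 0 < (M.mulVec v₀ + g v₀) i) :
    ∀ t ∈ Set.Ico t₀ T, ∀ i, 0 < (M.mulVec (v t) + g (v t)) i := by
  set w : ℝ → Fin n → ℝ := fun t => M.mulVec (v t) + g (v t) with hwdef
  -- derivative of w on Ico t₀ T
  have L : (Fin n → ℝ) →L[ℝ] (Fin n → ℝ) := LinearMap.toContinuousLinearMap M.mulVecLin
  have hw' : ∀ t ∈ Set.Ico t₀ T,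
      HasDerivAt w (M.mulVec (w t) + (g' (v t)) (w t)) t := by
    intro t ht
    have h1 : HasDerivAt (fun s => M.mulVec (v s)) (M.mulVec (w t)) t := by
      have := ((LinearMap.toContinuousLinearMap M.mulVecLin).hasFDerivAt).comp_hasDerivAt
        t (hv t ht)
      simpa [Function.comp_def, hwdef] using this
    have h2 : HasDerivAt (fun s => g (v s)) ((g' (v t)) (w t)) t :=
      (hg (v t)).comp_hasDerivAt t (hv t ht)
    exact h1.add h2
  have hwcont : ∀ t ∈ Set.Ico t₀ T, ContinuousAt w t :=
    fun t ht => (hw' t ht).continuousAt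
  have hwt₀ : ∀ i, 0 < w t₀ i := by
    intro i; simpa [hwdef, hv₀] using hw₀ i
  intro t₁ ht₁
  by_contra hbad
  push_neg at hbad
  obtain ⟨ibad, hibad⟩ := hbad
  -- the bad set
  set B : Set ℝ := Set.Icc t₀ t₁ ∩ w ⁻¹' {y | ∃ i, y i ≤ 0} with hBdef
  have hsub : Set.Icc t₀ t₁ ⊆ Set.Ico t₀ T :=
    Set.Icc_subset_Ico_right ht₁.2
  have hBclosed : IsClosed B := by
    refine ContinuousOn.preimage_isClosed_of_isClosed ?_ isClosed_Icc ?_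
    · exact fun t ht => ((hwcont t (hsub ht)).continuousWithinAt)
    · have : {y : Fin n → ℝ | ∃ i, y i ≤ 0} = ⋃ i, {y | y i ≤ 0} := by
        ext y; simp
      rw [this]
      exact isClosed_iUnion_of_finite fun i =>
        isClosed_le (continuous_apply i) continuous_const
  have ht₀₁ : t₀ ≤ t₁ := ht₁.1
  have hBne : B.Nonempty := ⟨t₁, ⟨ht₀₁, le_refl _⟩, ⟨ibad, hibad⟩⟩
  have hBbdd : BddBelow B := ⟨t₀, fun t ht => ht.1.1⟩
  set τ := sInf B with hτdef
  have hτB : τ ∈ B := hBclosed.csInf_mem hBne hBbdd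
  have hτIcc : τ ∈ Set.Icc t₀ t₁ := hτB.1
  have ht₀B : t₀ ∉ B := by
    rintro ⟨-, i, hi⟩
    exact absurd (hwt₀ i) (not_lt.mpr hi)
  have hτgt : t₀ < τ := lt_of_le_of_ne hτIcc.1 (fun h => ht₀B (h ▸ hτB))
  have hpos : ∀ t ∈ Set.Ico t₀ τ, ∀ i, 0 < w t i := by
    intro t ht i
    by_contra h
    push_neg at h
    have : t ∈ B := ⟨⟨ht.1, ht.2.le.trans hτIcc.2⟩, ⟨i, h⟩⟩
    exact absurd (csInf_le hBbdd this) (not_le.mpr ht.2)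
  have hτnonneg : ∀ i, 0 ≤ w τ i := by
    intro i
    by_contra h
    push_neg at h
    have hca : ContinuousAt (fun t => w t i) τ :=
      ((continuous_apply i).continuousAt).comp (hwcont τ (hsub hτIcc))
    have h1 : {t : ℝ | w t i < 0} ∈ 𝓝 τ := hca (Iio_mem_nhds h)
    have h2 : Set.Ico t₀ τ ∈ 𝓝[<] τ := Ico_mem_nhdsLT_of_mem ⟨hτgt, le_refl τ⟩
    have h3 : {t : ℝ | w t i < 0} ∈ 𝓝[<] τ := nhdsWithin_le_nhds h1
    obtain ⟨t, ht2, ht3⟩ := Filter.nonempty_of_mem (Filter.inter_mem h2 h3)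
    exact absurd (hpos t ht2 i) (not_lt.mpr ht3.le)
  obtain ⟨i₀, hi₀⟩ := hτB.2
  set C := |M i₀ i₀| with hCdef
  set f : ℝ → ℝ := fun t => Real.exp (C * t) * w t i₀ with hfdef
  have hnonneg : ∀ t ∈ Set.Icc t₀ τ, ∀ i, 0 ≤ w t i := by
    intro t ht i
    rcases eq_or_lt_of_le ht.2 with h | h
    · rw [h]; exact hτnonneg i
    · exact (hpos t ⟨ht.1, h⟩ i).le
  have hIccsub : Set.Icc t₀ τ ⊆ Set.Ico t₀ T := fun t ht =>
    hsub ⟨ht.1, ht.2.trans hτIcc.2⟩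
  have hfderiv : ∀ t ∈ Set.Icc t₀ τ,
      HasDerivAt f (Real.exp (C*t) * (C * w t i₀ + (M.mulVec (w t) + g' (v t) (w t)) i₀)) t := by
    intro t ht
    have h1 : HasDerivAt (fun s => Real.exp (C*s)) (Real.exp (C*t) * C) t := by
      simpa using ((hasDerivAt_id t).const_mul C).exp
    have h2 : HasDerivAt (fun s => w s i₀) ((M.mulVec (w t) + g' (v t) (w t)) i₀) t :=
      (hasDerivAt_pi.mp (hw' t (hIccsub ht))) i₀
    have h3 : HasDerivAt (fun s => Real.exp (C*s) * w s i₀) _ t := h1.mul h2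
    convert h3 using 1
    ring
  have hderiv_nonneg : ∀ t ∈ Set.Icc t₀ τ,
      0 ≤ Real.exp (C*t) * (C * w t i₀ + (M.mulVec (w t) + g' (v t) (w t)) i₀) := by
    intro t ht
    have hw_nn : ∀ j, 0 ≤ w t j := hnonneg t ht
    have h1 : M i₀ i₀ * w t i₀ ≤ M.mulVec (w t) i₀ := mulVec_diag_le M hM _ hw_nn i₀
    have h2 : 0 ≤ g' (v t) (w t) i₀ := by
      rw [diag_clm_apply (g' (v t)) (hdiagJ (v t)) (w t) i₀]
      exact mul_nonneg (hw_nn i₀) (hnonnegJ (v t) i₀)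
    have h3 : 0 ≤ C + M i₀ i₀ := by
      have := neg_abs_le (M i₀ i₀)
      rw [hCdef]; linarith
    have h4 : 0 ≤ (C + M i₀ i₀) * w t i₀ := mul_nonneg h3 (hw_nn i₀)
    have h5 : 0 ≤ C * w t i₀ + (M.mulVec (w t) + g' (v t) (w t)) i₀ := by
      simp only [Pi.add_apply]
      nlinarith
    exact mul_nonneg (Real.exp_pos _).le h5
  have hmono : MonotoneOn f (Set.Icc t₀ τ) := by
    refine monotoneOn_of_deriv_nonneg (convex_Icc t₀ τ) ?_ ?_ ?_
    · exact fun t ht => ((hfderiv t ht).continuousAt).continuousWithinAt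
    · intro t ht
      rw [interior_Icc] at ht
      exact ((hfderiv t (Set.Ioo_subset_Icc_self ht)).differentiableAt).differentiableWithinAt
    · intro t ht
      rw [interior_Icc] at ht
      rw [(hfderiv t (Set.Ioo_subset_Icc_self ht)).deriv]
      exact hderiv_nonneg t (Set.Ioo_subset_Icc_self ht)
  have hle : f t₀ ≤ f τ :=
    hmono ⟨le_refl _, hτgt.le⟩ ⟨hτgt.le, le_refl _⟩ hτgt.le
  have hft₀ : 0 < f t₀ := mul_pos (Real.exp_pos _) (hwt₀ i₀)
  have hfτ : f τ ≤ 0 := mul_nonpos_of_nonneg_of_nonpos (Real.exp_pos _).le hi₀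
  linarith
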